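/- Let Λ = Λ⁽¹⁾ ⊕ ... ⊕ Λ⁽ᵏ⁾ be a direct sum of Orlik blocks for a finite-order automorphism M_h, with cyclic generators e⁽¹⁾,...,e⁽ᵏ⁾. Let p₀ ∈ ℤ[t] divide gcd(p_{Λ⁽¹⁾},...,p_{Λ⁽ᵏ⁾}), and let g be an automorphism of Λ commuting with M_h such that g = id on Λ⁽ʲ⁾_{p_{Λ⁽ʲ⁾}/p₀} for every j. Then the unique polynomials p_{ij} ∈ ℤ[t]_{< rank Λ⁽ʲ⁾} with g(e⁽ʲ⁾) = Σ_i p_{ij}(M_h)(e⁽ⁱ⁾) satisfy p_{ij} = δ_{ij} + (p_{Λ⁽ⁱ⁾}/p₀)·q_{ij} for suitable q_{ij} ∈ ℤ[t]_{< deg p₀}. Moreover, for a root ξ of p₀, g acts on the eigenvectors v(e⁽ʲ⁾, ξ) = (p_{Λ⁽ʲ⁾}/(t-ξ))(M_h)(e⁽ʲ⁾) by g(v(e⁽ʲ⁾, ξ)) = Σ_i (δ_{ij} + (p_{Λ⁽ʲ⁾}/p₀)·q_{ij})(ξ) · v(e⁽ⁱ⁾, ξ). -/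

import Mathlib

open scoped TensorProduct
open Polynomial

section OrlikAux

variable {R : Type*} [CommRing R] {N : Type*} [AddCommGroup N] [Module R N]

lemma orlik_aeval_apply_fin (T : Module.End R N) (f : R[X]) (n : ℕ)
    (hf : f.degree < (n : WithBot ℕ)) (x : N) :
    (Polynomial.aeval T f) x = ∑ m : Fin n, f.coeff (m : ℕ) • (T ^ (m : ℕ)) x := by
  rcases eq_or_ne f 0 with rfl | hf0
  · simp
  · have hn : f.natDegree < n := (Polynomial.natDegree_lt_iff_degree_lt hf0).mpr hf
    rw [Polynomial.aeval_eq_sum_range' hn,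
      Fin.sum_univ_eq_sum_range (fun m => f.coeff m • (T ^ m) x)]
    simp [LinearMap.sum_apply]

lemma orlik_mem_span (T : Module.End R N) (f : R[X]) (n : ℕ)
    (hf : f.degree < (n : WithBot ℕ)) (x : N) :
    (Polynomial.aeval T f) x ∈
      Submodule.span R (Set.range fun m : Fin n => (T ^ (m : ℕ)) x) := by
  rw [orlik_aeval_apply_fin T f n hf x]
  exact Submodule.sum_mem _ fun m _ =>
    Submodule.smul_mem _ _ (Submodule.subset_span ⟨m, rfl⟩)

lemma orlik_aeval_modByMonic (T : Module.End R N) (f P : R[X]) (hP : P.Monic) (x : N)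
    (hx : (Polynomial.aeval T P) x = 0) :
    (Polynomial.aeval T f) x = (Polynomial.aeval T (f %ₘ P)) x := by
  conv_lhs => rw [← Polynomial.modByMonic_add_div f P]
  have h2 : (Polynomial.aeval T (P * (f /ₘ P))) x = 0 := by
    rw [mul_comm, map_mul, Module.End.mul_apply, hx, map_zero]
  rw [map_add, LinearMap.add_apply, h2, add_zero]

lemma orlik_commute_aeval {A : Type*} [Ring A] [Algebra R A] {x y : A}
    (h : Commute x y) (f : R[X]) : Commute x (Polynomial.aeval y f) := by
  induction f using Polynomial.induction_on' with
  | add u v hu hv => rw [map_add]; exact hu.add_right hv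
  | monomial n a =>
    rw [Polynomial.aeval_monomial]
    exact (Commute.symm (Algebra.commutes a x)).mul_right (h.pow_right n)

end OrlikAux

section OrlikInt

variable {N : Type*} [AddCommGroup N] [Module ℤ N]

lemma orlik_aeval_apply_fin_int (T : Module.End ℤ N) (f : ℤ[X]) (n : ℕ)
    (hf : f.degree < (n : WithBot ℕ)) (x : N) :
    (Polynomial.aeval T f) x = ∑ m : Fin n, f.coeff (m : ℕ) • (T ^ (m : ℕ)) x := by
  rcases eq_or_ne f 0 with rfl | hf0
  · simp
  · have hn : f.natDegree < n := (Polynomial.natDegree_lt_iff_degree_lt hf0).mpr hf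
    rw [Polynomial.aeval_eq_sum_range' hn,
      Fin.sum_univ_eq_sum_range (fun m => f.coeff m • (T ^ m) x)]
    simp [LinearMap.sum_apply]

lemma orlik_mem_span_int (T : Module.End ℤ N) (f : ℤ[X]) (n : ℕ)
    (hf : f.degree < (n : WithBot ℕ)) (x : N) :
    (Polynomial.aeval T f) x ∈
      Submodule.span ℤ (Set.range fun m : Fin n => (T ^ (m : ℕ)) x) := by
  rw [orlik_aeval_apply_fin_int T f n hf x]
  exact Submodule.sum_mem _ fun m _ =>
    zsmul_mem (Submodule.subset_span (Set.mem_range_self m)) _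

lemma orlik_aeval_modByMonic_int (T : Module.End ℤ N) (f P : ℤ[X]) (hP : P.Monic) (x : N)
    (hx : (Polynomial.aeval T P) x = 0) :
    (Polynomial.aeval T f) x = (Polynomial.aeval T (f %ₘ P)) x := by
  conv_lhs => rw [← Polynomial.modByMonic_add_div f P]
  have h2 : (Polynomial.aeval T (P * (f /ₘ P))) x = 0 := by
    rw [mul_comm, map_mul, Module.End.mul_apply, hx, map_zero]
  rw [map_add, LinearMap.add_apply, h2, add_zero]

end OrlikInt

/-- For an automorphism `g` of a direct sum of Orlik blocks commuting with the monodromy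
and acting as the identity on each `Λ⁽ʲ⁾_{pⱼ/p₀}`, the coefficient polynomials satisfy
`p_{ij} = δ_{ij} + (p_i/p₀)·q_{ij}` with `q_{ij} ∈ ℤ[t]_{<deg p₀}`, and for a root `ξ` of
`p₀` the action of `g` on the eigenvectors `v(e⁽ʲ⁾, ξ)` is given by evaluating
`δ_{ij} + (pⱼ/p₀)·q_{ij}` at `ξ`. -/
theorem stmt_17 (Λ : Type*) [AddCommGroup Λ] [Module ℤ Λ]
    [Module.Free ℤ Λ] [Module.Finite ℤ Λ]
    (M : Λ ≃ₗ[ℤ] Λ) (nn : ℕ) (hnn : 0 < nn) (hMn : M ^ nn = 1)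
    (Mend : Module.End ℤ Λ) (hMend : Mend = M.toLinearMap)
    (k : ℕ) (e : Fin k → Λ) (p : Fin k → Polynomial ℤ)
    (hpm : ∀ i, (p i).Monic)
    (hpe : ∀ i, (Polynomial.aeval Mend (p i)) (e i) = 0)
    (hind : LinearIndependent ℤ
      (fun x : Σ i : Fin k, Fin (p i).natDegree => (Mend ^ (x.2 : ℕ)) (e x.1)))
    (hspan : Submodule.span ℤ
      (Set.range fun x : Σ i : Fin k, Fin (p i).natDegree => (Mend ^ (x.2 : ℕ)) (e x.1)) = ⊤)
    (g : Λ ≃ₗ[ℤ] Λ) (hgM : ∀ a : Λ, g (M a) = M (g a))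
    (p₀ : Polynomial ℤ) (r : Fin k → Polynomial ℤ)
    (hr : ∀ i, p₀ * r i = p i)
    (hgid : ∀ (i : Fin k) (a : Λ),
      a ∈ Submodule.span ℤ
        (Set.range fun j : Fin (p i).natDegree => (Mend ^ (j : ℕ)) (e i)) →
      (Polynomial.aeval Mend (r i)) a = 0 → g a = a) :
    ∃ q : Fin k → Fin k → Polynomial ℤ,
      (∀ i j, (q i j).degree < p₀.degree) ∧
      (∀ j, g (e j) = e j + ∑ i, (Polynomial.aeval Mend (r i * q i j)) (e i)) ∧
      (∀ ξ : ℂ, Polynomial.aeval ξ p₀ = 0 →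
        ∀ u : Fin k → Polynomial ℂ,
          (∀ i, (Polynomial.X - Polynomial.C ξ) * u i = (p i).map (Int.castRingHom ℂ)) →
          ∀ j,
            (LinearMap.baseChange ℂ g.toLinearMap)
                ((Polynomial.aeval
                    (LinearMap.baseChange ℂ Mend : Module.End ℂ (ℂ ⊗[ℤ] Λ)) (u j))
                  ((1 : ℂ) ⊗ₜ[ℤ] e j))
              = ∑ i,
                  (Polynomial.aeval ξ (if i = j then 1 + r j * q i j else r j * q i j)) •
                    ((Polynomial.aeval
                        (LinearMap.baseChange ℂ Mend : Module.End ℂ (ℂ ⊗[ℤ] Λ)) (u i))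
                      ((1 : ℂ) ⊗ₜ[ℤ] e i))) := by
  classical
  -- coefficients of g(e j) - e j in the basis
  have hg1 : ∀ j : Fin k, g (e j) - e j ∈ Submodule.span ℤ
      (Set.range fun x : Σ i : Fin k, Fin (p i).natDegree => (Mend ^ (x.2 : ℕ)) (e x.1)) := by
    intro j; rw [hspan]; trivial
  choose c hc using fun j => (Submodule.mem_span_range_iff_exists_fun ℤ).mp (hg1 j)
  set s : Fin k → Fin k → ℤ[X] := fun i j =>
    ∑ m : Fin (p i).natDegree, Polynomial.C (c j ⟨i, m⟩) * Polynomial.X ^ (m : ℕ) with hs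
  have hsdeg : ∀ i j, (s i j).degree < (((p i).natDegree : ℕ) : WithBot ℕ) := by
    intro i j
    rw [← Polynomial.mem_degreeLT]
    refine Submodule.sum_mem _ fun m _ => ?_
    rw [Polynomial.mem_degreeLT]
    exact lt_of_le_of_lt (Polynomial.degree_C_mul_X_pow_le (m : ℕ) _)
      (by exact_mod_cast m.isLt)
  have hscoeff : ∀ i j (m : Fin (p i).natDegree), (s i j).coeff (m : ℕ) = c j ⟨i, m⟩ := by
    intro i j m
    simp only [hs, Polynomial.finset_sum_coeff, Polynomial.coeff_C_mul,
      Polynomial.coeff_X_pow, mul_ite, mul_one, mul_zero, Fin.val_eq_val]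
    rw [Finset.sum_ite_eq Finset.univ m (fun m' => c j ⟨i, m'⟩)]
    simp
  have hsub : ∀ j, g (e j) - e j = ∑ i, (Polynomial.aeval Mend (s i j)) (e i) := by
    intro j
    rw [← hc j, ← Finset.univ_sigma_univ, Finset.sum_sigma]
    refine Finset.sum_congr rfl fun i _ => ?_
    rw [orlik_aeval_apply_fin_int Mend (s i j) ((p i).natDegree) (hsdeg i j) (e i)]
    refine Finset.sum_congr rfl fun m _ => ?_
    rw [hscoeff i j m]
    exact int_smul_eq_zsmul _ _ _
  have hgej : ∀ j, g (e j) = e j + ∑ i, (Polynomial.aeval Mend (s i j)) (e i) := by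
    intro j; rw [← hsub j]; abel
  -- commutation
  have hcommMg : Commute g.toLinearMap Mend := by
    refine LinearMap.ext fun a => ?_
    simp [hMend, Module.End.mul_apply, hgM a]
  have hgaeval : ∀ (f : ℤ[X]) (a : Λ),
      g ((Polynomial.aeval Mend f) a) = (Polynomial.aeval Mend f) (g a) := by
    intro f a
    have h := LinearMap.congr_fun (orlik_commute_aeval hcommMg f) a
    simpa [Module.End.mul_apply] using h
  -- p₀ kills g(e j) - e j
  have h0 : ∀ j, (Polynomial.aeval Mend p₀) (g (e j)) = (Polynomial.aeval Mend p₀) (e j) := by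
    intro j
    have ha : (Polynomial.aeval Mend (r j)) ((Polynomial.aeval Mend p₀) (e j)) = 0 := by
      rw [← Module.End.mul_apply, ← map_mul, mul_comm, hr j, hpe j]
    have hmem : (Polynomial.aeval Mend p₀) (e j) ∈ Submodule.span ℤ
        (Set.range fun m : Fin (p j).natDegree => (Mend ^ (m : ℕ)) (e j)) := by
      rw [orlik_aeval_modByMonic_int Mend p₀ (p j) (hpm j) (e j) (hpe j)]
      refine orlik_mem_span_int _ _ _ ?_ _
      calc (p₀ %ₘ p j).degree < (p j).degree :=
            Polynomial.degree_modByMonic_lt _ (hpm j)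
        _ = (((p j).natDegree : ℕ) : WithBot ℕ) :=
            Polynomial.degree_eq_natDegree (hpm j).ne_zero
    calc (Polynomial.aeval Mend p₀) (g (e j))
        = g ((Polynomial.aeval Mend p₀) (e j)) := (hgaeval _ _).symm
      _ = (Polynomial.aeval Mend p₀) (e j) := hgid j _ hmem ha
  -- divisibility
  have hdvd : ∀ j i, p i ∣ p₀ * s i j := by
    intro j
    have hsum0 : ∑ i, (Polynomial.aeval Mend ((p₀ * s i j) %ₘ p i)) (e i) = 0 := by
      have h1 : ∑ i, (Polynomial.aeval Mend ((p₀ * s i j) %ₘ p i)) (e i)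
          = (Polynomial.aeval Mend p₀) (g (e j) - e j) := by
        rw [hsub j, map_sum]
        refine Finset.sum_congr rfl fun i _ => ?_
        rw [← orlik_aeval_modByMonic_int Mend _ (p i) (hpm i) (e i) (hpe i),
          map_mul, Module.End.mul_apply]
      rw [h1, map_sub, h0 j, sub_self]
    have hind' := Fintype.linearIndependent_iff.mp hind
      (fun x => ((p₀ * s x.1 j) %ₘ p x.1).coeff (x.2 : ℕ)) ?_
    · intro i
      rw [← Polynomial.modByMonic_eq_zero_iff_dvd (hpm i)]
      ext m
      rcases lt_or_ge m (p i).natDegree with hm | hm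
      · simpa using hind' ⟨i, ⟨m, hm⟩⟩
      · rw [Polynomial.coeff_zero]
        refine Polynomial.coeff_eq_zero_of_degree_lt ?_
        calc ((p₀ * s i j) %ₘ p i).degree < (p i).degree :=
              Polynomial.degree_modByMonic_lt _ (hpm i)
          _ = (((p i).natDegree : ℕ) : WithBot ℕ) :=
              Polynomial.degree_eq_natDegree (hpm i).ne_zero
          _ ≤ (m : WithBot ℕ) := by exact_mod_cast hm
    · rw [← Finset.univ_sigma_univ, Finset.sum_sigma]
      rw [← hsum0]
      refine Finset.sum_congr rfl fun i _ => ?_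
      rw [orlik_aeval_apply_fin_int Mend ((p₀ * s i j) %ₘ p i) ((p i).natDegree)
        (lt_of_lt_of_le (Polynomial.degree_modByMonic_lt _ (hpm i))
          (le_of_eq (Polynomial.degree_eq_natDegree (hpm i).ne_zero))) (e i)]
      exact Finset.sum_congr rfl fun m _ => int_smul_eq_zsmul _ _ _
  have hrq : ∀ i j, ∃ t, s i j = r i * t := by
    intro i j
    have hp0 : p₀ ≠ 0 := fun h => (hpm i).ne_zero (by rw [← hr i, h, zero_mul])
    have hd := hdvd j i
    rw [← hr i] at hd
    exact (mul_dvd_mul_iff_left hp0).mp hd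
  choose q hq using hrq
  have hrne : ∀ i, r i ≠ 0 := fun i h => (hpm i).ne_zero (by rw [← hr i, h, mul_zero])
  have hgq : ∀ j, g (e j) = e j + ∑ i, (Polynomial.aeval Mend (r i * q i j)) (e i) := by
    intro j
    rw [hgej j]
    simp only [← hq]
  refine ⟨q, ?_, hgq, ?_⟩
  · intro i j
    have h1 : (r i).degree + (q i j).degree < (r i).degree + p₀.degree := by
      rw [← Polynomial.degree_mul, ← hq i j]
      calc (s i j).degree < (((p i).natDegree : ℕ) : WithBot ℕ) := hsdeg i j
        _ = (p i).degree := (Polynomial.degree_eq_natDegree (hpm i).ne_zero).symm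
        _ = p₀.degree + (r i).degree := by rw [← hr i, Polynomial.degree_mul]
        _ = (r i).degree + p₀.degree := add_comm _ _
    exact (WithBot.add_lt_add_iff_left
      (fun h => hrne i (Polynomial.degree_eq_bot.mp h))).mp h1
  -- complex part
  · intro ξ hξ u hu j
    have hXne : (X - C ξ : ℂ[X]) ≠ 0 := Polynomial.X_sub_C_ne_zero ξ
    set Mc : Module.End ℂ (ℂ ⊗[ℤ] Λ) := LinearMap.baseChange ℂ Mend with hMc
    have hBC : ∀ f : ℤ[X], Polynomial.aeval Mc (f.map (Int.castRingHom ℂ))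
        = LinearMap.baseChange ℂ (Polynomial.aeval Mend f) := by
      intro f
      induction f using Polynomial.induction_on' with
      | add a b ha hb => rw [Polynomial.map_add, map_add, ha, hb, map_add, LinearMap.baseChange_add]
      | monomial n a =>
        rw [Polynomial.map_monomial, aeval_monomial, aeval_monomial, LinearMap.baseChange_mul,
          LinearMap.baseChange_pow]
        congr 1
        ext x
        simp
        exact (map_zsmul (TensorProduct.mk ℤ ℂ Λ 1) a x).symm
    have hv0 : ∀ i, Polynomial.aeval Mc ((p i).map (Int.castRingHom ℂ))
        ((1:ℂ) ⊗ₜ[ℤ] e i) = 0 := by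
      intro i
      rw [hBC, LinearMap.baseChange_tmul, hpe i, TensorProduct.tmul_zero]
    have hkill : ∀ (i : Fin k) (h : ℂ[X]),
        Polynomial.aeval Mc ((p i).map (Int.castRingHom ℂ) * h) ((1:ℂ) ⊗ₜ[ℤ] e i) = 0 := by
      intro i h
      rw [mul_comm, map_mul, Module.End.mul_apply, hv0 i, map_zero]
    have hXd : (X - C ξ : ℂ[X]) ∣ p₀.map (Int.castRingHom ℂ) := by
      rw [Polynomial.dvd_iff_isRoot]
      show Polynomial.eval ξ (p₀.map (Int.castRingHom ℂ)) = 0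
      rw [Polynomial.eval_map, ← algebraMap_int_eq, ← Polynomial.aeval_def, hξ]
    obtain ⟨w, hw⟩ := hXd
    have hui : ∀ i, u i = w * (r i).map (Int.castRingHom ℂ) := by
      intro i
      apply mul_left_cancel₀ hXne
      rw [hu i, ← hr i, Polynomial.map_mul, hw]
      ring
    have hcommC : Commute (LinearMap.baseChange ℂ g.toLinearMap) Mc :=
      hcommMg.map (Module.End.baseChangeHom ℤ ℂ Λ)
    have hgC : ∀ (f : ℂ[X]) (x : ℂ ⊗[ℤ] Λ),
        (LinearMap.baseChange ℂ g.toLinearMap) (Polynomial.aeval Mc f x)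
          = Polynomial.aeval Mc f ((LinearMap.baseChange ℂ g.toLinearMap) x) := by
      intro f x
      have h := LinearMap.congr_fun (orlik_commute_aeval hcommC f) x
      simpa [Module.End.mul_apply] using h
    have hgv : (LinearMap.baseChange ℂ g.toLinearMap) ((1:ℂ) ⊗ₜ[ℤ] e j)
        = (1:ℂ) ⊗ₜ[ℤ] e j + ∑ i, Polynomial.aeval Mc
            ((r i * q i j).map (Int.castRingHom ℂ)) ((1:ℂ) ⊗ₜ[ℤ] e i) := by
      rw [LinearMap.baseChange_tmul]
      show (1:ℂ) ⊗ₜ[ℤ] (g (e j)) = _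
      rw [hgq j, TensorProduct.tmul_add]
      congr 1
      rw [TensorProduct.tmul_sum]
      exact Finset.sum_congr rfl fun i _ => by rw [hBC, LinearMap.baseChange_tmul]
    have key : ∀ i : Fin k,
        Polynomial.aeval Mc (u j * (r i * q i j).map (Int.castRingHom ℂ))
            ((1:ℂ) ⊗ₜ[ℤ] e i)
          = (Polynomial.aeval ξ (r j * q i j)) •
              Polynomial.aeval Mc (u i) ((1:ℂ) ⊗ₜ[ℤ] e i) := by
      intro i
      have heval : Polynomial.eval ξ ((r j * q i j).map (Int.castRingHom ℂ))
          = Polynomial.aeval ξ (r j * q i j) := by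
        rw [Polynomial.eval_map, ← algebraMap_int_eq, ← Polynomial.aeval_def]
      obtain ⟨h, hh⟩ := Polynomial.X_sub_C_dvd_sub_C_eval
        (a := ξ) (p := (r j * q i j).map (Int.castRingHom ℂ))
      have hkey : u j * (r i * q i j).map (Int.castRingHom ℂ)
          = Polynomial.C (Polynomial.aeval ξ (r j * q i j)) * u i
            + (p i).map (Int.castRingHom ℂ) * h := by
        rw [← heval, ← hu i]
        have e1 : u j * (r i * q i j).map (Int.castRingHom ℂ)
            = u i * (r j * q i j).map (Int.castRingHom ℂ) := by
          simp only [Polynomial.map_mul]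
          rw [hui i, hui j]; ring
        rw [e1]
        linear_combination u i * hh
      rw [hkey, map_add, LinearMap.add_apply, hkill i h, add_zero,
        ← Polynomial.smul_eq_C_mul, map_smul, LinearMap.smul_apply]
    have hsplit : ∀ i : Fin k,
        (Polynomial.aeval ξ (if i = j then 1 + r j * q i j else r j * q i j)) •
            Polynomial.aeval Mc (u i) ((1:ℂ) ⊗ₜ[ℤ] e i)
          = (Polynomial.aeval ξ (r j * q i j)) •
              Polynomial.aeval Mc (u i) ((1:ℂ) ⊗ₜ[ℤ] e i)
            + (if i = j then Polynomial.aeval Mc (u i) ((1:ℂ) ⊗ₜ[ℤ] e i) else 0) := by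
      intro i
      by_cases hij : i = j
      · simp only [hij, if_true, map_add, map_one, add_smul, one_smul]
        exact add_comm _ _
      · simp [hij]
    calc (LinearMap.baseChange ℂ g.toLinearMap)
          (Polynomial.aeval Mc (u j) ((1:ℂ) ⊗ₜ[ℤ] e j))
        = Polynomial.aeval Mc (u j)
            ((LinearMap.baseChange ℂ g.toLinearMap) ((1:ℂ) ⊗ₜ[ℤ] e j)) := hgC _ _
      _ = Polynomial.aeval Mc (u j) ((1:ℂ) ⊗ₜ[ℤ] e j)
            + ∑ i, Polynomial.aeval Mc (u j * (r i * q i j).map (Int.castRingHom ℂ))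
                ((1:ℂ) ⊗ₜ[ℤ] e i) := by
          rw [hgv, map_add, map_sum]
          congr 1
          refine Finset.sum_congr rfl fun i _ => ?_
          rw [map_mul, Module.End.mul_apply]
      _ = Polynomial.aeval Mc (u j) ((1:ℂ) ⊗ₜ[ℤ] e j)
            + ∑ i, (Polynomial.aeval ξ (r j * q i j)) •
                Polynomial.aeval Mc (u i) ((1:ℂ) ⊗ₜ[ℤ] e i) := by
          rw [Finset.sum_congr rfl fun i _ => key i]
      _ = ∑ i, (Polynomial.aeval ξ (if i = j then 1 + r j * q i j else r j * q i j)) •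
            Polynomial.aeval Mc (u i) ((1:ℂ) ⊗ₜ[ℤ] e i) := by
          rw [Finset.sum_congr rfl fun i _ => hsplit i, Finset.sum_add_distrib,
            Finset.sum_ite_eq' Finset.univ j
              (fun i => Polynomial.aeval Mc (u i) ((1:ℂ) ⊗ₜ[ℤ] e i)),
            if_pos (Finset.mem_univ j)]
          exact add_comm _ _
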